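/- Let m be a positive integer and r an integer. For τ ∈ ℍ define the weight 3/2 unary theta function θ¹_{m,r}(τ) = Σ_{ℓ ∈ ℤ, ℓ ≡ r (mod 2m)} ℓ · e^{2πi τ ℓ²/(4m)} and the false theta function Ψ_{m,r}(τ) = Σ_{ℓ ∈ ℤ, ℓ ≡ r (mod 2m)} sgn(ℓ) · e^{2πi τ ℓ²/(4m)}. Then for every τ ∈ ℍ, ∫_0^∞ θ¹_{m,r}(τ + i s) · s^{−1/2} ds = √(2m) · Ψ_{m,r}(τ), with the integral absolutely convergent. -/

import Mathlib

open Complex MeasureTheory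

/-- The weight 3/2 unary theta function
`θ¹_{m,r}(τ) = Σ_{ℓ ≡ r (2m)} ℓ q^{ℓ²/4m}`. -/
noncomputable def unaryTheta1 (m : ℕ) (r : ℤ) (τ : ℂ) : ℂ :=
  ∑' ℓ : ℤ, if (ℓ : ZMod (2 * m)) = (r : ZMod (2 * m)) then
      (ℓ : ℂ) * Complex.exp (2 * Real.pi * Complex.I * τ * (ℓ : ℂ) ^ 2 / (4 * m))
    else 0

/-- The false theta function `Ψ_{m,r}(τ) = Σ_{ℓ ≡ r (2m)} sgn(ℓ) q^{ℓ²/4m}`. -/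
noncomputable def falseTheta (m : ℕ) (r : ℤ) (τ : ℂ) : ℂ :=
  ∑' ℓ : ℤ, if (ℓ : ZMod (2 * m)) = (r : ZMod (2 * m)) then
      (Int.sign ℓ : ℂ) * Complex.exp (2 * Real.pi * Complex.I * τ * (ℓ : ℂ) ^ 2 / (4 * m))
    else 0

namespace EichlerAux

/-- The coefficient of the `ℓ`-th term of `unaryTheta1` at `τ`. -/
noncomputable def A (m : ℕ) (r : ℤ) (τ : ℂ) (ℓ : ℤ) : ℂ :=
  if (ℓ : ZMod (2 * m)) = (r : ZMod (2 * m)) then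
    (ℓ : ℂ) * Complex.exp (2 * Real.pi * Complex.I * τ * (ℓ : ℂ) ^ 2 / (4 * m))
  else 0

/-- The decay rate of the `ℓ`-th term. -/
noncomputable def B (m : ℕ) (ℓ : ℤ) : ℝ := 2 * Real.pi * (ℓ : ℝ) ^ 2 / (4 * m)

/-- The `ℓ`-th term of the integrand. -/
noncomputable def F (m : ℕ) (r : ℤ) (τ : ℂ) (ℓ : ℤ) (s : ℝ) : ℂ :=
  A m r τ ℓ * ((Real.exp (-(B m ℓ * s)) * s ^ (-(1/2) : ℝ) : ℝ) : ℂ)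

lemma ofReal_setIntegral (f : ℝ → ℝ) (s : Set ℝ) :
    ∫ x in s, ((f x : ℝ) : ℂ) = ((∫ x in s, f x : ℝ) : ℂ) := by
  have cc : ∀ u : ℝ, (u : ℂ) = @RCLike.ofReal ℂ _ u := fun _ => rfl
  simp_rw [cc]
  exact integral_ofReal

lemma A_zero (m : ℕ) (r : ℤ) (τ : ℂ) : A m r τ 0 = 0 := by simp [A]

lemma F_zero (m : ℕ) (r : ℤ) (τ : ℂ) : F m r τ 0 = fun _ => 0 := by
  funext s; unfold F; rw [A_zero]; simp

lemma A_ne_zero_imp {m : ℕ} {r : ℤ} {τ : ℂ} {ℓ : ℤ} (h : A m r τ ℓ ≠ 0) : ℓ ≠ 0 := by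
  rintro rfl; exact h (A_zero m r τ)

lemma B_nonneg (m : ℕ) (ℓ : ℤ) : 0 ≤ B m ℓ := by unfold B; positivity

lemma B_pos {m : ℕ} (hm : 0 < m) {ℓ : ℤ} (hℓ : ℓ ≠ 0) : 0 < B m ℓ := by
  have h2 : (0:ℝ) < (ℓ:ℝ)^2 := by
    have h3 : (ℓ:ℝ) ≠ 0 := Int.cast_ne_zero.mpr hℓ
    positivity
  have hm' : (0:ℝ) < (m:ℝ) := by exact_mod_cast hm
  unfold B
  positivity

lemma one_le_sq {ℓ : ℤ} (hℓ : ℓ ≠ 0) : (1:ℝ) ≤ (ℓ:ℝ)^2 := by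
  have h1 : (1:ℤ) ≤ ℓ^2 := by nlinarith [Int.one_le_abs hℓ, _root_.sq_abs ℓ, abs_nonneg ℓ]
  exact_mod_cast h1

lemma B_le_B {m : ℕ} (hm : 0 < m) {ℓ : ℤ} (hℓ : ℓ ≠ 0) : B m 1 ≤ B m ℓ := by
  have hm' : (0:ℝ) < 4 * (m:ℝ) := by positivity
  unfold B
  refine div_le_div_of_nonneg_right ?_ hm'.le
  have h1 := one_le_sq hℓ
  push_cast
  nlinarith [Real.pi_pos]

/-- The norm of the coefficient `A ℓ`. -/
lemma norm_A_le (m : ℕ) (r : ℤ) (τ : ℂ) (ℓ : ℤ) :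
    ‖A m r τ ℓ‖ ≤ |(ℓ:ℝ)| * Real.exp (-(B m ℓ * τ.im)) := by
  have hw : (2 * (Real.pi:ℂ) * Complex.I * τ * (ℓ:ℂ)^2 / (4 * (m:ℂ))) =
      ((B m ℓ : ℝ) : ℂ) * (Complex.I * τ) := by
    unfold B; push_cast; ring
  unfold A
  split
  · rw [norm_mul, hw]
    have h1 : ‖Complex.exp (((B m ℓ : ℝ) : ℂ) * (Complex.I * τ))‖ =
        Real.exp (-(B m ℓ * τ.im)) := by
      rw [Complex.norm_exp]
      congr 1
      simp [Complex.re_ofReal_mul, Complex.mul_re, Complex.I_re, Complex.I_im]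
    have h2 : ‖(ℓ:ℂ)‖ = |(ℓ:ℝ)| := by
      rw [show ((ℓ:ℤ):ℂ) = ((ℓ:ℝ):ℂ) by push_cast; rfl, Complex.norm_real, Real.norm_eq_abs]
    rw [h1, h2]
  · simp only [norm_zero]
    positivity

/-- Summability of the coefficient norms. -/
lemma summable_norm_A (m : ℕ) (hm : 0 < m) (r : ℤ) (τ : ℂ) (hτ : 0 < τ.im) :
    Summable fun ℓ : ℤ => ‖A m r τ ℓ‖ := by
  have hm' : (0:ℝ) < (m:ℝ) := by exact_mod_cast hm
  have hT : 0 < τ.im / (2 * m) := by positivity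
  have h := summable_pow_mul_jacobiTheta₂_term_bound 0 hT 1
  have h' : Summable fun ℓ : ℤ => |(ℓ:ℝ)| * Real.exp (-(B m ℓ * τ.im)) := by
    refine h.congr fun ℓ => ?_
    rw [pow_one]
    congr 1
    · push_cast; ring
    · congr 1
      unfold B
      field_simp
      ring
  exact h'.of_nonneg_of_le (fun ℓ => norm_nonneg _) (fun ℓ => norm_A_le m r τ ℓ)

/-- The basic real integrand is integrable. -/
lemma integrable_kernel {b : ℝ} (hb : 0 < b) :
    IntegrableOn (fun s : ℝ => Real.exp (-(b * s)) * s ^ (-(1/2) : ℝ)) (Set.Ioi 0) := by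
  have h := integrableOn_rpow_mul_exp_neg_mul_rpow
    (by norm_num : (-1:ℝ) < -(1/2)) (by norm_num : (0:ℝ) < 1) hb
  refine h.congr_fun (fun s hs => ?_) measurableSet_Ioi
  dsimp only
  rw [Real.rpow_one, mul_comm, neg_mul]

/-- Value of the basic integral, via `Γ(1/2) = √π`. -/
lemma kernel_integral {b : ℝ} (hb : 0 < b) :
    ∫ s in Set.Ioi (0:ℝ), Real.exp (-(b * s)) * s ^ (-(1/2) : ℝ) =
      Real.sqrt Real.pi / Real.sqrt b := by
  have h := Real.integral_rpow_mul_exp_neg_mul_Ioi (a := 1/2) (r := b) one_half_pos hb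
  rw [show (1/2 : ℝ) - 1 = -(1/2) by norm_num, Real.Gamma_one_half_eq] at h
  calc ∫ s in Set.Ioi (0:ℝ), Real.exp (-(b * s)) * s ^ (-(1/2) : ℝ)
      = ∫ s in Set.Ioi (0:ℝ), s ^ (-(1/2) : ℝ) * Real.exp (-(b * s)) := by
        simp_rw [mul_comm]
    _ = (1/b) ^ (1/2:ℝ) * Real.sqrt Real.pi := h
    _ = Real.sqrt Real.pi / Real.sqrt b := by
        rw [← Real.sqrt_eq_rpow, one_div, Real.sqrt_inv, div_eq_mul_inv, mul_comm]

lemma F_measurable (m : ℕ) (r : ℤ) (τ : ℂ) (ℓ : ℤ) : Measurable (F m r τ ℓ) := by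
  unfold F
  fun_prop

lemma F_integrable (m : ℕ) (hm : 0 < m) (r : ℤ) (τ : ℂ) (ℓ : ℤ) :
    IntegrableOn (F m r τ ℓ) (Set.Ioi 0) := by
  by_cases hℓ : ℓ = 0
  · subst hℓ
    rw [F_zero]
    exact integrable_zero _ _ _
  · unfold F
    exact ((integrable_kernel (B_pos hm hℓ)).ofReal).const_mul _

lemma norm_F (m : ℕ) (r : ℤ) (τ : ℂ) (ℓ : ℤ) {s : ℝ} (hs : 0 < s) :
    ‖F m r τ ℓ s‖ = ‖A m r τ ℓ‖ * (Real.exp (-(B m ℓ * s)) * s ^ (-(1/2) : ℝ)) := by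
  unfold F
  rw [norm_mul, Complex.norm_real, Real.norm_eq_abs,
    _root_.abs_of_nonneg (by positivity : (0:ℝ) ≤ Real.exp (-(B m ℓ * s)) * s ^ (-(1/2) : ℝ))]

lemma norm_F_le (m : ℕ) (hm : 0 < m) (r : ℤ) (τ : ℂ) (ℓ : ℤ) {s : ℝ} (hs : 0 < s) :
    ‖F m r τ ℓ s‖ ≤ ‖A m r τ ℓ‖ * (Real.exp (-(B m 1 * s)) * s ^ (-(1/2) : ℝ)) := by
  rw [norm_F m r τ ℓ hs]
  by_cases hA : A m r τ ℓ = 0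
  · rw [hA]
    simp only [norm_zero, zero_mul]
    positivity
  · have hℓ : ℓ ≠ 0 := A_ne_zero_imp hA
    have h1 : Real.exp (-(B m ℓ * s)) ≤ Real.exp (-(B m 1 * s)) :=
      Real.exp_le_exp.mpr (by nlinarith [B_le_B hm hℓ, hs.le])
    exact mul_le_mul_of_nonneg_left
      (mul_le_mul_of_nonneg_right h1 (by positivity)) (norm_nonneg _)

lemma summable_norm_F (m : ℕ) (hm : 0 < m) (r : ℤ) (τ : ℂ) (hτ : 0 < τ.im)
    {s : ℝ} (hs : 0 < s) : Summable fun ℓ : ℤ => ‖F m r τ ℓ s‖ :=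
  Summable.of_nonneg_of_le (fun ℓ => norm_nonneg _)
    (fun ℓ => norm_F_le m hm r τ ℓ hs)
    ((summable_norm_A m hm r τ hτ).mul_right _)

lemma summable_F (m : ℕ) (hm : 0 < m) (r : ℤ) (τ : ℂ) (hτ : 0 < τ.im)
    {s : ℝ} (hs : 0 < s) : Summable fun ℓ : ℤ => F m r τ ℓ s :=
  (summable_norm_F m hm r τ hτ hs).of_norm

/-- Pointwise identity: the integrand is the sum of the `F ℓ`. -/
lemma key_eq (m : ℕ) (r : ℤ) (τ : ℂ) (s : ℝ) :
    unaryTheta1 m r (τ + Complex.I * s) * ((s ^ (-(1/2) : ℝ) : ℝ) : ℂ) =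
      ∑' ℓ : ℤ, F m r τ ℓ s := by
  rw [unaryTheta1, ← tsum_mul_right]
  refine tsum_congr fun ℓ => ?_
  unfold F A
  split
  · have hexp : Complex.exp (2 * Real.pi * Complex.I * (τ + Complex.I * s) * (ℓ:ℂ)^2 / (4 * m))
        = Complex.exp (2 * Real.pi * Complex.I * τ * (ℓ:ℂ)^2 / (4 * m)) *
          Complex.exp ((-(B m ℓ * s) : ℝ) : ℂ) := by
      rw [← Complex.exp_add]
      congr 1
      unfold B
      push_cast
      linear_combination (2 * (Real.pi:ℂ) * (s:ℂ) * (ℓ:ℂ)^2 / (4 * (m:ℂ))) * Complex.I_mul_I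
    rw [hexp]
    push_cast
    ring
  · simp

/-- Value of the `ℓ`-th integral. -/
lemma F_integral (m : ℕ) (hm : 0 < m) (r : ℤ) (τ : ℂ) (ℓ : ℤ) :
    ∫ s in Set.Ioi (0:ℝ), F m r τ ℓ s =
      ((Real.sqrt (2 * m) : ℝ) : ℂ) *
        (if (ℓ : ZMod (2 * m)) = (r : ZMod (2 * m)) then
          (Int.sign ℓ : ℂ) * Complex.exp (2 * Real.pi * Complex.I * τ * (ℓ:ℂ)^2 / (4 * m))
        else 0) := by
  by_cases hℓ : ℓ = 0
  · subst hℓ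
    rw [F_zero]
    simp
  · unfold F
    rw [MeasureTheory.integral_const_mul, ofReal_setIntegral, kernel_integral (B_pos hm hℓ)]
    have hπ : (0:ℝ) < Real.pi := Real.pi_pos
    have hm' : (0:ℝ) < (m:ℝ) := by exact_mod_cast hm
    have habsℓ : (0:ℝ) < |(ℓ:ℝ)| := by
      simp only [abs_pos]
      exact Int.cast_ne_zero.mpr hℓ
    have hBval : Real.sqrt Real.pi / Real.sqrt (B m ℓ) = Real.sqrt (2*m) / |(ℓ:ℝ)| := by
      have hB : B m ℓ = (Real.pi / (2*m)) * (ℓ:ℝ)^2 := by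
        unfold B; field_simp; ring
      rw [hB, Real.sqrt_mul (by positivity) , Real.sqrt_sq_eq_abs,
        Real.sqrt_div Real.pi_pos.le]
      have h1 : Real.sqrt Real.pi ≠ 0 := by positivity
      have h2 : Real.sqrt (2*(m:ℝ)) ≠ 0 := by positivity
      have h3 : |(ℓ:ℝ)| ≠ 0 := ne_of_gt habsℓ
      field_simp
    rw [hBval]
    unfold A
    split
    · have habs : ((|ℓ| : ℤ) : ℂ) ≠ 0 := by
        simp only [ne_eq, Int.cast_eq_zero, abs_eq_zero]
        exact hℓ
      have hsgn : ((Int.sign ℓ : ℤ) : ℂ) * ((|ℓ| : ℤ) : ℂ) = (ℓ : ℂ) := by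
        rw [← Int.cast_mul, Int.sign_mul_abs]
      have hcast : ((|(ℓ:ℝ)| : ℝ) : ℂ) = ((|ℓ| : ℤ) : ℂ) := by norm_cast
      rw [Complex.ofReal_div, hcast]
      rw [← hsgn]
      push_cast
      field_simp
    · simp

end EichlerAux

open EichlerAux in
/-- the false theta function `Ψ_{m,r}` is the Eichler integral of the
weight 3/2 unary theta function `θ¹_{m,r}`:
`∫_0^∞ θ¹_{m,r}(τ+is) s^{−1/2} ds = √(2m)·Ψ_{m,r}(τ)`. -/
theorem falseTheta_eichler_integral (m : ℕ) (hm : 0 < m) (r : ℤ) (τ : ℂ)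
    (hτ : 0 < τ.im) :
    IntegrableOn
      (fun s : ℝ => unaryTheta1 m r (τ + Complex.I * s) * ((s ^ (-(1 / 2) : ℝ) : ℝ) : ℂ))
      (Set.Ioi 0) ∧
    ∫ s in Set.Ioi (0 : ℝ),
        unaryTheta1 m r (τ + Complex.I * s) * ((s ^ (-(1 / 2) : ℝ) : ℝ) : ℂ) =
      (Real.sqrt (2 * m) : ℂ) * falseTheta m r τ := by
  have horig : (fun s : ℝ => unaryTheta1 m r (τ + Complex.I * s) *
      ((s ^ (-(1 / 2) : ℝ) : ℝ) : ℂ)) = fun s : ℝ => ∑' ℓ : ℤ, F m r τ ℓ s := by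
    funext s
    exact key_eq m r τ s
  rw [horig]
  have hSA := summable_norm_A m hm r τ hτ
  set K : ℝ := ∑' ℓ : ℤ, ‖A m r τ ℓ‖ with hK
  -- a.e. strong measurability of the sum
  have hmeas : AEStronglyMeasurable (fun s : ℝ => ∑' ℓ : ℤ, F m r τ ℓ s)
      ((volume : Measure ℝ).restrict (Set.Ioi 0)) := by
    refine aestronglyMeasurable_of_tendsto_ae
      (f := fun (n : Finset ℤ) (s : ℝ) => ∑ ℓ ∈ n, F m r τ ℓ s)
      (Filter.atTop : Filter (Finset ℤ)) (fun n => ?_) ?_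
    · exact (n.aestronglyMeasurable_fun_sum
        (fun ℓ _ => (F_measurable m r τ ℓ).aestronglyMeasurable))
    · filter_upwards [ae_restrict_mem measurableSet_Ioi] with s hs
      exact (summable_F m hm r τ hτ hs).hasSum
  -- domination
  have hbound : ∀ {s : ℝ}, 0 < s → ‖∑' ℓ : ℤ, F m r τ ℓ s‖ ≤
      K * (Real.exp (-(B m 1 * s)) * s ^ (-(1/2) : ℝ)) := by
    intro s hs
    calc ‖∑' ℓ : ℤ, F m r τ ℓ s‖ ≤ ∑' ℓ : ℤ, ‖F m r τ ℓ s‖ :=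
          norm_tsum_le_tsum_norm (summable_norm_F m hm r τ hτ hs)
      _ ≤ ∑' ℓ : ℤ, ‖A m r τ ℓ‖ * (Real.exp (-(B m 1 * s)) * s ^ (-(1/2) : ℝ)) := by
          refine Summable.tsum_le_tsum (fun ℓ => norm_F_le m hm r τ ℓ hs)
            (summable_norm_F m hm r τ hτ hs) (hSA.mul_right _)
      _ = K * (Real.exp (-(B m 1 * s)) * s ^ (-(1/2) : ℝ)) := tsum_mul_right
  have hInt : IntegrableOn (fun s : ℝ => ∑' ℓ : ℤ, F m r τ ℓ s) (Set.Ioi 0) := by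
    have hgint : IntegrableOn
        (fun s : ℝ => K * (Real.exp (-(B m 1 * s)) * s ^ (-(1/2) : ℝ))) (Set.Ioi 0) :=
      (integrable_kernel (B_pos hm one_ne_zero)).const_mul K
    refine Integrable.mono' hgint hmeas ?_
    filter_upwards [ae_restrict_mem measurableSet_Ioi] with s hs
    exact hbound hs
  refine ⟨hInt, ?_⟩
  -- summability of the integrals of norms
  have hF_sum : Summable fun ℓ : ℤ => ∫ s in Set.Ioi (0:ℝ), ‖F m r τ ℓ s‖ := by
    refine Summable.of_nonneg_of_le
      (fun ℓ => integral_nonneg fun s => norm_nonneg _)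
      (fun ℓ => ?_) (hSA.mul_right (Real.sqrt Real.pi / Real.sqrt (B m 1)))
    by_cases hℓ : ℓ = 0
    · subst hℓ
      rw [F_zero]
      simp only [norm_zero]
      rw [integral_zero]
      positivity
    · have heq : ∫ s in Set.Ioi (0:ℝ), ‖F m r τ ℓ s‖ =
          ‖A m r τ ℓ‖ * (Real.sqrt Real.pi / Real.sqrt (B m ℓ)) := by
        rw [← kernel_integral (B_pos hm hℓ), ← MeasureTheory.integral_const_mul]
        refine setIntegral_congr_fun measurableSet_Ioi fun s hs => ?_
        exact norm_F m r τ ℓ hs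
      rw [heq]
      gcongr
      · exact Real.sqrt_pos.mpr (B_pos hm one_ne_zero)
      · exact B_le_B hm hℓ
  have hswap := integral_tsum_of_summable_integral_norm
    (fun ℓ => F_integrable m hm r τ ℓ) hF_sum
  rw [← hswap]
  rw [tsum_congr (fun ℓ => F_integral m hm r τ ℓ)]
  rw [tsum_mul_left]
  rfl
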